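/- For d ≥ 2 and i in {2,...,d-1}, the coefficient of the monomial a_{d-1}^{d-i} a_{d-i} in the resultant R_i = Res(f, H_i(f)) ∈ Z[a_1,...,a_{d-1}] equals (-1)^{(d-1)(d-i)} C(d,i)^{d-1}. -/

import Mathlib

open Polynomial

/-- The Sylvester matrix of `f` (regarded as having degree `m`) and `g`
(regarded as having degree `n`). -/
def sylvester {R : Type*} [CommRing R] (f g : Polynomial R) (m n : ℕ) :
    Matrix (Fin (m + n)) (Fin (m + n)) R :=
  Matrix.of fun i j =>
    if (i : ℕ) < n then
      (if (i : ℕ) ≤ j ∧ (j : ℕ) ≤ (i : ℕ) + m then f.coeff (m + i - j) else 0)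
    else
      (if (i : ℕ) - n ≤ j ∧ (j : ℕ) ≤ ((i : ℕ) - n) + n then g.coeff (n + ((i : ℕ) - n) - j) else 0)

/-- The resultant of `f` and `g`, regarded as polynomials of degrees `m` and `n`. -/
def res {R : Type*} [CommRing R] (f g : Polynomial R) (m n : ℕ) : R :=
  (_root_.sylvester f g m n).det

/-- The generic monic polynomial `x^d + a_1 x^{d-1} + ⋯ + a_{d-1} x` with zero constant
term over `ℤ[a_1, …, a_{d-1}]`, where `MvPolynomial.X j` plays the role of `a_j`. -/
noncomputable def genF (d : ℕ) : Polynomial (MvPolynomial ℕ ℤ) :=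
  X ^ d + ∑ j ∈ Finset.Icc 1 (d - 1), C (MvPolynomial.X j) * X ^ (d - j)

/-- `R_i = Res(f, H_i(f))`, the resultant of the generic polynomial and its `i`-th Hasse
derivative, regarded as polynomials of degrees `d` and `d - i`. -/
noncomputable def Rres (d i : ℕ) : MvPolynomial ℕ ℤ :=
  res (genF d) (Polynomial.hasseDeriv i (genF d)) d (d - i)



def krow (n r : ℕ) : ℕ := if r < n then r else r - n
def spanrow (d n r : ℕ) : ℕ := if r < n then d - 1 else n

noncomputable def wfun (d n r j : ℕ) : ℕ →₀ ℕ :=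
  if krow n r < j ∧ j ≤ krow n r + spanrow d n r then Finsupp.single (j - krow n r) 1 else 0

noncomputable def cfun (d i n r j : ℕ) : ℤ :=
  if j = krow n r then (if r < n then 1 else (d.choose i : ℤ))
  else if krow n r < j ∧ j ≤ krow n r + spanrow d n r then
    (if r < n then 1 else ((d - (j - krow n r)).choose i : ℤ))
  else 0

lemma genF_coeff (d t : ℕ) (hd : 1 ≤ d) (ht : t ≤ d) :
    (genF d).coeff t =
      if t = d then 1 else if 1 ≤ t then MvPolynomial.X (d - t) else 0 := by
  unfold genF
  rw [Polynomial.coeff_add, Polynomial.coeff_X_pow, Polynomial.finset_sum_coeff]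
  simp only [Polynomial.coeff_C_mul, Polynomial.coeff_X_pow]
  by_cases h1 : t = d
  · rw [if_pos h1, if_pos h1, Finset.sum_eq_zero, add_zero]
    intro j hj
    rw [Finset.mem_Icc] at hj
    rw [if_neg (by omega), mul_zero]
  · rw [if_neg h1, if_neg h1, zero_add]
    by_cases h2 : 1 ≤ t
    · rw [if_pos h2, Finset.sum_eq_single (d - t)]
      · rw [if_pos (by omega), mul_one]
      · intro j hj hne
        rw [Finset.mem_Icc] at hj
        rw [if_neg (by omega), mul_zero]
      · intro h
        exact absurd (Finset.mem_Icc.mpr ⟨by omega, by omega⟩) h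
    · rw [if_neg h2, Finset.sum_eq_zero]
      intro j hj
      rw [Finset.mem_Icc] at hj
      rw [if_neg (by omega), mul_zero]

lemma monomial_single_one (s : ℕ) (c : ℤ) :
    (MvPolynomial.monomial (Finsupp.single s 1) c : MvPolynomial ℕ ℤ) =
      MvPolynomial.C c * MvPolynomial.X s := by
  have hx : (MvPolynomial.X s : MvPolynomial ℕ ℤ) =
      MvPolynomial.monomial (Finsupp.single s 1) 1 := by
    rw [← MvPolynomial.X_pow_eq_monomial, pow_one]
  rw [hx, MvPolynomial.C_mul_monomial, mul_one]

lemma prod_monomial {α : Type*} (s : Finset α) (w : α → (ℕ →₀ ℕ)) (c : α → ℤ) :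
    (∏ a ∈ s, (MvPolynomial.monomial (w a) (c a) : MvPolynomial ℕ ℤ)) =
      MvPolynomial.monomial (∑ a ∈ s, w a) (∏ a ∈ s, c a) := by
  classical
  induction s using Finset.induction with
  | empty => simp
  | insert _ _ h ih =>
      rw [Finset.prod_insert h, Finset.sum_insert h, Finset.prod_insert h, ih,
        MvPolynomial.monomial_mul]

lemma card_lt_filter (N n : ℕ) (h : n ≤ N) :
    (Finset.univ.filter (fun r : Fin N => (r : ℕ) < n)).card = n := by
  rw [Finset.card_filter]
  rw [Fin.sum_univ_eq_sum_range (fun t => if t < n then 1 else 0) N]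
  rw [← Finset.sum_subset (Finset.range_subset_range.mpr h)
    (fun x _ hx => if_neg (by simp at hx; omega))]
  rw [Finset.sum_congr rfl (fun x hx => if_pos (Finset.mem_range.mp hx))]
  simp

lemma neg_one_pow_congr' (a b : ℕ) (h : a % 2 = b % 2) : ((-1 : ℤ)) ^ a = (-1) ^ b := by
  rw [← Nat.div_add_mod a 2, ← Nat.div_add_mod b 2, h, pow_add, pow_add, pow_mul, pow_mul]
  norm_num

def rho (s : ℕ) (hs : 3 ≤ s) : Equiv.Perm (Fin s) :=
  finRotate s * Equiv.swap ⟨s - 2, by omega⟩ ⟨s - 1, by omega⟩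

lemma finRotate_val (m : ℕ) (y : Fin (m + 1)) :
    ((finRotate (m + 1) y : Fin (m + 1)) : ℕ) = ((y : ℕ) + 1) % (m + 1) := by
  rw [finRotate_succ_apply, Fin.val_add, Fin.val_one']
  simp [Nat.add_mod_mod]

lemma rho_val (s : ℕ) (hs : 3 ≤ s) (x : Fin s) :
    ((rho s hs x : Fin s) : ℕ) =
      if (x : ℕ) < s - 1 then ((x : ℕ) + 1) % (s - 1) else (x : ℕ) := by
  obtain ⟨m, rfl⟩ : ∃ m, s = m + 1 := ⟨s - 1, by omega⟩
  have hm : 2 ≤ m := by omega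
  unfold rho
  rw [Equiv.Perm.mul_apply]
  by_cases h1 : (x : ℕ) = m - 1
  · have hx : x = (⟨m + 1 - 2, by omega⟩ : Fin (m + 1)) :=
      Fin.ext (by show _ = m + 1 - 2; omega)
    rw [hx, Equiv.swap_apply_left, finRotate_val]
    rw [if_pos (show ((⟨m + 1 - 2, by omega⟩ : Fin (m + 1)) : ℕ) < m + 1 - 1 by
      show m + 1 - 2 < m + 1 - 1; omega)]
    show (m + 1 - 1 + 1) % (m + 1) = (m + 1 - 2 + 1) % (m + 1 - 1)
    rw [show m + 1 - 1 + 1 = m + 1 from by omega, show m + 1 - 2 + 1 = m from by omega,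
      show m + 1 - 1 = m from by omega, Nat.mod_self, Nat.mod_self]
  · by_cases h2 : (x : ℕ) = m
    · have hx : x = (⟨m + 1 - 1, by omega⟩ : Fin (m + 1)) :=
        Fin.ext (by show _ = m + 1 - 1; omega)
      rw [hx, Equiv.swap_apply_right, finRotate_val]
      rw [if_neg (show ¬ ((⟨m + 1 - 1, by omega⟩ : Fin (m + 1)) : ℕ) < m + 1 - 1 by
        show ¬ m + 1 - 1 < m + 1 - 1; omega)]
      show (m + 1 - 2 + 1) % (m + 1) = m + 1 - 1
      rw [show m + 1 - 2 + 1 = m from by omega, Nat.mod_eq_of_lt (by omega)]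
      omega
    · rw [Equiv.swap_apply_of_ne_of_ne
        (by intro h; apply h1; rw [h]; show (m + 1 - 2 : ℕ) = m - 1; omega)
        (by intro h; apply h2; rw [h]; show (m + 1 - 1 : ℕ) = m; omega)]
      rw [finRotate_val]
      have hlt := x.isLt
      rw [if_pos (by omega)]
      rw [Nat.mod_eq_of_lt (show (x : ℕ) + 1 < m + 1 by omega),
        Nat.mod_eq_of_lt (show (x : ℕ) + 1 < m + 1 - 1 by omega)]

lemma rho_pow_val (s : ℕ) (hs : 3 ≤ s) (t : ℕ) (x : Fin s) :
    (((rho s hs ^ t) x : Fin s) : ℕ) =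
      if (x : ℕ) < s - 1 then ((x : ℕ) + t) % (s - 1) else (x : ℕ) := by
  induction t with
  | zero =>
      rw [pow_zero]
      simp only [Equiv.Perm.one_apply]
      split_ifs with h
      · rw [Nat.add_zero, Nat.mod_eq_of_lt h]
      · rfl
  | succ t ih =>
      rw [pow_succ', Equiv.Perm.mul_apply, rho_val, ih]
      by_cases h : (x : ℕ) < s - 1
      · rw [if_pos h, if_pos (Nat.mod_lt _ (by omega)), Nat.mod_add_mod, Nat.add_assoc, if_pos h]
      · simp only [if_neg h]

lemma rho_sign (s : ℕ) (hs : 3 ≤ s) : Equiv.Perm.sign (rho s hs) = (-1) ^ s := by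
  obtain ⟨m, rfl⟩ : ∃ m, s = m + 1 := ⟨s - 1, by omega⟩
  unfold rho
  rw [map_mul, sign_finRotate, Equiv.Perm.sign_swap (by
    intro h
    rw [Fin.mk.injEq] at h
    omega)]
  rw [pow_succ]
  rw [Nat.add_sub_cancel]
lemma krow_ge (n r : ℕ) (h : ¬ r < n) : krow n r = r - n := by unfold krow; rw [if_neg h]
lemma krow_lt (n r : ℕ) (h : r < n) : krow n r = r := by unfold krow; rw [if_pos h]
lemma spanrow_ge (d n r : ℕ) (h : ¬ r < n) : spanrow d n r = n := by
  unfold spanrow; rw [if_neg h]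
lemma spanrow_lt (d n r : ℕ) (h : r < n) : spanrow d n r = d - 1 := by
  unfold spanrow; rw [if_pos h]

lemma eval_g0 (d i b : ℕ) :
    wfun d (d - i) (b + (d - i)) b = 0 ∧
      cfun d i (d - i) (b + (d - i)) b = (d.choose i : ℤ) := by
  have hk : krow (d - i) (b + (d - i)) = b := by
    unfold krow; split_ifs <;> omega
  have hr : ¬ (b + (d - i) < d - i) ∨ True := Or.inr trivial
  constructor
  · unfold wfun
    rw [hk, if_neg (fun h => lt_irrefl b h.1)]
  · unfold cfun
    rw [hk, if_pos rfl]
    by_cases hbn : b + (d - i) < d - i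
    · omega
    · rw [if_neg hbn]

lemma eval_f (d i b : ℕ) (hd : 2 ≤ d) (h1 : d - 1 ≤ b) (h2 : b < d + (d - i) - 1) :
    wfun d (d - i) (b - (d - 1)) b = Finsupp.single (d - 1) 1 ∧
      cfun d i (d - i) (b - (d - 1)) b = 1 := by
  have hlt : b - (d - 1) < d - i := by omega
  have hk : krow (d - i) (b - (d - 1)) = b - (d - 1) := krow_lt _ _ hlt
  have hsp : spanrow d (d - i) (b - (d - 1)) = d - 1 := spanrow_lt _ _ _ hlt
  have hband : krow (d - i) (b - (d - 1)) < b ∧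
      b ≤ krow (d - i) (b - (d - 1)) + spanrow d (d - i) (b - (d - 1)) := by
    rw [hk, hsp]; omega
  constructor
  · unfold wfun
    rw [if_pos hband, hk, show b - (b - (d - 1)) = d - 1 from by omega]
  · unfold cfun
    rw [hk, hsp, if_neg (by omega), if_pos (by omega), if_pos hlt]

lemma eval_last (d i : ℕ) (hd : 2 ≤ d) (hi1 : 1 ≤ i) (hi2 : i ≤ d - 1) :
    wfun d (d - i) (d + (d - i) - 1) (d + (d - i) - 1) = Finsupp.single (d - i) 1 ∧
      cfun d i (d - i) (d + (d - i) - 1) (d + (d - i) - 1) = 1 := by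
  have hge : ¬ (d + (d - i) - 1 < d - i) := by omega
  have hk : krow (d - i) (d + (d - i) - 1) = d - 1 := by rw [krow_ge _ _ hge]; omega
  have hsp : spanrow d (d - i) (d + (d - i) - 1) = d - i := spanrow_ge _ _ _ hge
  have hband : krow (d - i) (d + (d - i) - 1) < d + (d - i) - 1 ∧
      d + (d - i) - 1 ≤ krow (d - i) (d + (d - i) - 1) + spanrow d (d - i) (d + (d - i) - 1) := by
    rw [hk, hsp]; omega
  constructor
  · unfold wfun
    rw [if_pos hband, hk, show d + (d - i) - 1 - (d - 1) = d - i from by omega]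
  · unfold cfun
    rw [hk, hsp, if_neg (by omega), if_pos (by omega), if_neg hge,
      show d - (d + (d - i) - 1 - (d - 1)) = i from by omega, Nat.choose_self, Nat.cast_one]
lemma sylvester_entry (d i : ℕ) (hd : 2 ≤ d) (hi1 : 1 ≤ i) (hi2 : i ≤ d - 1)
    (r j : Fin (d + (d - i))) :
    _root_.sylvester (genF d) (Polynomial.hasseDeriv i (genF d)) d (d - i) r j =
      MvPolynomial.monomial (wfun d (d - i) (r : ℕ) (j : ℕ))
        (cfun d i (d - i) (r : ℕ) (j : ℕ)) := by
  unfold _root_.sylvester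
  rw [Matrix.of_apply]
  by_cases hr : (r : ℕ) < d - i
  · rw [if_pos hr]
    have hk : krow (d - i) (r : ℕ) = (r : ℕ) := krow_lt _ _ hr
    have hsp : spanrow d (d - i) (r : ℕ) = d - 1 := spanrow_lt _ _ _ hr
    by_cases h1 : (r : ℕ) ≤ (j : ℕ) ∧ (j : ℕ) ≤ (r : ℕ) + d
    · rw [if_pos h1]
      rw [genF_coeff d (d + (r : ℕ) - (j : ℕ)) (by omega) (by omega)]
      by_cases h2 : (j : ℕ) = (r : ℕ)
      · have hw : wfun d (d - i) (r : ℕ) (j : ℕ) = 0 := by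
          unfold wfun; rw [hk, hsp, if_neg (by omega)]
        have hc : cfun d i (d - i) (r : ℕ) (j : ℕ) = 1 := by
          unfold cfun; rw [hk, if_pos h2, if_pos hr]
        rw [hw, hc, if_pos (by omega), MvPolynomial.monomial_zero', MvPolynomial.C_1]
      · by_cases h3 : (j : ℕ) = (r : ℕ) + d
        · have hc : cfun d i (d - i) (r : ℕ) (j : ℕ) = 0 := by
            unfold cfun; rw [hk, hsp, if_neg h2, if_neg (by omega)]
          rw [hc, if_neg (by omega), if_neg (by omega)]
          simp
        · have hw : wfun d (d - i) (r : ℕ) (j : ℕ) =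
              Finsupp.single ((j : ℕ) - (r : ℕ)) 1 := by
            unfold wfun; rw [hk, hsp, if_pos (by omega)]
          have hc : cfun d i (d - i) (r : ℕ) (j : ℕ) = 1 := by
            unfold cfun; rw [hk, hsp, if_neg h2, if_pos (by omega), if_pos hr]
          rw [hw, hc, if_neg (by omega), if_pos (by omega),
            show d - (d + (r : ℕ) - (j : ℕ)) = (j : ℕ) - (r : ℕ) from by omega,
            monomial_single_one, MvPolynomial.C_1, one_mul]
    · rw [if_neg h1]
      have hc : cfun d i (d - i) (r : ℕ) (j : ℕ) = 0 := by
        unfold cfun; rw [hk, hsp, if_neg (by omega), if_neg (by omega)]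
      rw [hc]
      simp
  · rw [if_neg hr]
    have hk : krow (d - i) (r : ℕ) = (r : ℕ) - (d - i) := krow_ge _ _ hr
    have hsp : spanrow d (d - i) (r : ℕ) = d - i := spanrow_ge _ _ _ hr
    by_cases h1 : (r : ℕ) - (d - i) ≤ (j : ℕ) ∧ (j : ℕ) ≤ ((r : ℕ) - (d - i)) + (d - i)
    · rw [if_pos h1]
      rw [Polynomial.hasseDeriv_coeff]
      by_cases h2 : (j : ℕ) = (r : ℕ) - (d - i)
      · have hw : wfun d (d - i) (r : ℕ) (j : ℕ) = 0 := by
          unfold wfun; rw [hk, hsp, if_neg (by omega)]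
        have hc : cfun d i (d - i) (r : ℕ) (j : ℕ) = (d.choose i : ℤ) := by
          unfold cfun; rw [hk, if_pos h2, if_neg hr]
        rw [hw, hc, show (d - i) + ((r : ℕ) - (d - i)) - (j : ℕ) + i = d from by omega,
          genF_coeff d d (by omega) le_rfl, if_pos rfl, mul_one,
          MvPolynomial.monomial_zero', map_natCast]
      · have hw : wfun d (d - i) (r : ℕ) (j : ℕ) =
            Finsupp.single ((j : ℕ) - ((r : ℕ) - (d - i))) 1 := by
          unfold wfun; rw [hk, hsp, if_pos (by omega)]
        have hc : cfun d i (d - i) (r : ℕ) (j : ℕ) =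
            ((d - ((j : ℕ) - ((r : ℕ) - (d - i)))).choose i : ℤ) := by
          unfold cfun; rw [hk, hsp, if_neg h2, if_pos (by omega), if_neg hr]
        rw [hw, hc, show (d - i) + ((r : ℕ) - (d - i)) - (j : ℕ) + i
              = d - ((j : ℕ) - ((r : ℕ) - (d - i))) from by omega,
          genF_coeff d _ (by omega) (by omega), if_neg (by omega), if_pos (by omega),
          show d - (d - ((j : ℕ) - ((r : ℕ) - (d - i)))) = (j : ℕ) - ((r : ℕ) - (d - i))
            from by omega,
          monomial_single_one, map_natCast]
    · rw [if_neg h1]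
      have hc : cfun d i (d - i) (r : ℕ) (j : ℕ) = 0 := by
        unfold cfun; rw [hk, hsp, if_neg (by omega), if_neg (by omega)]
      rw [hc]
      simp
def offS (d n : ℕ) (σ : Equiv.Perm (Fin (d + n))) (t : ℕ) : Finset (Fin (d + n)) :=
  Finset.univ.filter (fun x =>
    (krow n (σ x) < (x : ℕ) ∧ (x : ℕ) ≤ krow n (σ x) + spanrow d n (σ x)) ∧
      (x : ℕ) - krow n (σ x) = t)

lemma mem_offS {d n : ℕ} {σ : Equiv.Perm (Fin (d + n))} {t : ℕ} {x : Fin (d + n)} :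
    x ∈ offS d n σ t ↔
      ((krow n (σ x) < (x : ℕ) ∧ (x : ℕ) ≤ krow n (σ x) + spanrow d n (σ x)) ∧
        (x : ℕ) - krow n (σ x) = t) := by
  unfold offS
  simp

lemma perm_unique (d i : ℕ) (hd : 2 ≤ d) (hi1 : 2 ≤ i) (hi2 : i ≤ d - 1)
    (σ : Equiv.Perm (Fin (d + (d - i))))
    (hc : ∀ j : Fin (d + (d - i)), cfun d i (d - i) (σ j) (j : ℕ) ≠ 0)
    (hw : (∑ j : Fin (d + (d - i)), wfun d (d - i) (σ j) (j : ℕ)) =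
      Finsupp.single (d - 1) (d - i) + Finsupp.single (d - i) 1)
    (j : Fin (d + (d - i))) :
    (σ j : ℕ) = if (j : ℕ) < d - 1 then (j : ℕ) + (d - i)
      else if (j : ℕ) < d + (d - i) - 1 then (j : ℕ) - (d - 1) else (j : ℕ) := by
  have hd3 : 3 ≤ d := by omega
  -- band alternative from nonvanishing of cfun
  have hband : ∀ x : Fin (d + (d - i)), (x : ℕ) = krow (d - i) (σ x) ∨
      (krow (d - i) (σ x) < (x : ℕ) ∧
        (x : ℕ) ≤ krow (d - i) (σ x) + spanrow d (d - i) (σ x)) := by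
    intro x
    by_contra hcon
    obtain ⟨hc1, hc2⟩ := not_or.mp hcon
    exact hc x (by unfold cfun; rw [if_neg hc1, if_neg hc2])
  -- cardinalities of offset classes
  have hcard : ∀ t : ℕ, (offS d (d - i) σ t).card =
      (if d - 1 = t then d - i else 0) + (if d - i = t then 1 else 0) := by
    intro t
    have h0 := DFunLike.congr_fun hw t
    rw [Finsupp.finset_sum_apply, Finsupp.add_apply, Finsupp.single_apply,
      Finsupp.single_apply] at h0
    rw [← h0]
    unfold offS
    rw [Finset.card_filter]
    apply Finset.sum_congr rfl
    intro x _
    unfold wfun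
    by_cases hb : (krow (d - i) (σ x) < (x : ℕ) ∧
        (x : ℕ) ≤ krow (d - i) (σ x) + spanrow d (d - i) (σ x))
    · rw [if_pos hb, Finsupp.single_apply]
      by_cases ht : (x : ℕ) - krow (d - i) (σ x) = t
      · rw [if_pos ⟨hb, ht⟩, if_pos ht]
      · rw [if_neg (fun hcon => ht hcon.2), if_neg ht]
    · rw [if_neg hb, if_neg (fun hcon => hb hcon.1), Finsupp.coe_zero, Pi.zero_apply]
  have hTcard : (Finset.univ.filter
      (fun r : Fin (d + (d - i)) => (r : ℕ) < d - i)).card = d - i :=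
    card_lt_filter _ _ (by omega)
  -- members of the (d-1)-offset class are f-rows
  have hSmem : ∀ x ∈ offS d (d - i) σ (d - 1),
      (σ x : ℕ) < d - i ∧ (x : ℕ) = (σ x : ℕ) + (d - 1) := by
    intro x hx
    rw [mem_offS] at hx
    obtain ⟨⟨hlt, hle⟩, hoff⟩ := hx
    by_cases hrr : (σ x : ℕ) < d - i
    · rw [krow_lt _ _ hrr] at hlt hoff
      exact ⟨hrr, by omega⟩
    · exfalso
      rw [krow_ge _ _ hrr] at hlt hle hoff
      rw [spanrow_ge _ _ _ hrr] at hle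
      omega
  have hScard : (offS d (d - i) σ (d - 1)).card = d - i := by
    rw [hcard, if_pos rfl, if_neg (by omega)]
    omega
  have himg : (offS d (d - i) σ (d - 1)).image σ =
      Finset.univ.filter (fun r : Fin (d + (d - i)) => (r : ℕ) < d - i) := by
    apply Finset.eq_of_subset_of_card_le
    · intro rr hrr
      rw [Finset.mem_image] at hrr
      obtain ⟨x, hx, rfl⟩ := hrr
      simp only [Finset.mem_filter, Finset.mem_univ, true_and]
      exact (hSmem x hx).1
    · rw [Finset.card_image_of_injective _ σ.injective, hTcard, hScard]
  -- middle columns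
  have hmid : ∀ x : Fin (d + (d - i)), d - 1 ≤ (x : ℕ) → (x : ℕ) < d + (d - i) - 1 →
      x ∈ offS d (d - i) σ (d - 1) ∧ (σ x : ℕ) = (x : ℕ) - (d - 1) := by
    intro x h1 h2
    have hmem : (⟨(x : ℕ) - (d - 1), by omega⟩ : Fin (d + (d - i))) ∈
        Finset.univ.filter (fun r : Fin (d + (d - i)) => (r : ℕ) < d - i) := by
      simp only [Finset.mem_filter, Finset.mem_univ, true_and]
      show (x : ℕ) - (d - 1) < d - i
      omega
    rw [← himg, Finset.mem_image] at hmem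
    obtain ⟨y, hy, hyeq⟩ := hmem
    have h3 := hSmem y hy
    have h4 : (σ y : ℕ) = (x : ℕ) - (d - 1) := by rw [hyeq]
    have h6 : y = x := Fin.ext (by omega)
    rw [h6] at hy h4
    exact ⟨hy, h4⟩
  have hback : ∀ x : Fin (d + (d - i)), (σ x : ℕ) < d - i →
      x ∈ offS d (d - i) σ (d - 1) := by
    intro x hx
    have hmem : σ x ∈ (offS d (d - i) σ (d - 1)).image σ := by
      rw [himg]
      simp only [Finset.mem_filter, Finset.mem_univ, true_and]
      exact hx
    rw [Finset.mem_image] at hmem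
    obtain ⟨y, hy, hyeq⟩ := hmem
    rwa [σ.injective hyeq] at hy
  have hSrange : ∀ x ∈ offS d (d - i) σ (d - 1),
      d - 1 ≤ (x : ℕ) ∧ (x : ℕ) < d + (d - i) - 1 := by
    intro x hx
    have h1 := hSmem x hx
    omega
  -- the last column
  have hlast : (⟨d + (d - i) - 1, by omega⟩ : Fin (d + (d - i))) ∈ offS d (d - i) σ (d - i) ∧
      ((σ (⟨d + (d - i) - 1, by omega⟩ : Fin (d + (d - i)))) : ℕ) = d + (d - i) - 1 := by
    set xN : Fin (d + (d - i)) := ⟨d + (d - i) - 1, by omega⟩ with hxN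
    have hxNv : (xN : ℕ) = d + (d - i) - 1 := rfl
    have hnotS : xN ∉ offS d (d - i) σ (d - 1) := by
      intro h
      have h1 := hSrange xN h
      omega
    have hge : ¬ ((σ xN : ℕ) < d - i) := fun h => hnotS (hback xN h)
    have hisLt := (σ xN).isLt
    rcases hband xN with h1 | h2
    · exfalso
      rw [krow_ge _ _ hge] at h1
      omega
    · rw [krow_ge _ _ hge, spanrow_ge _ _ _ hge] at h2
      have hsn : (xN : ℕ) - ((σ xN : ℕ) - (d - i)) = d - i := by
        by_contra hsn
        have hmem : xN ∈ offS d (d - i) σ ((xN : ℕ) - ((σ xN : ℕ) - (d - i))) := by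
          rw [mem_offS, krow_ge _ _ hge, spanrow_ge _ _ _ hge]
          exact ⟨h2, rfl⟩
        have hc0 := hcard ((xN : ℕ) - ((σ xN : ℕ) - (d - i)))
        rw [if_neg (by omega), if_neg (by omega)] at hc0
        have hemp : offS d (d - i) σ ((xN : ℕ) - ((σ xN : ℕ) - (d - i))) = ∅ :=
          Finset.card_eq_zero.mp (by omega)
        rw [hemp] at hmem
        exact Finset.notMem_empty _ hmem
      constructor
      · rw [mem_offS, krow_ge _ _ hge, spanrow_ge _ _ _ hge]
        exact ⟨h2, hsn⟩
      · omega
  have hS' : offS d (d - i) σ (d - i) =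
      {(⟨d + (d - i) - 1, by omega⟩ : Fin (d + (d - i)))} := by
    have h1 := hcard (d - i)
    rw [if_neg (by omega), if_pos rfl] at h1
    have h2 : (offS d (d - i) σ (d - i)).card = 1 := by omega
    rw [Finset.card_eq_one] at h2
    obtain ⟨a, ha⟩ := h2
    have h3 := hlast.1
    rw [ha, Finset.mem_singleton] at h3
    exact ha.trans (congrArg (fun z => ({z} : Finset (Fin (d + (d - i))))) h3.symm)
  -- small columns
  have hsmall : ∀ x : Fin (d + (d - i)), (x : ℕ) < d - 1 → (σ x : ℕ) = (x : ℕ) + (d - i) := by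
    intro x hx
    have hnotS : x ∉ offS d (d - i) σ (d - 1) := by
      intro h
      have h1 := hSrange x h
      omega
    have hge : ¬ ((σ x : ℕ) < d - i) := fun h => hnotS (hback x h)
    rcases hband x with h1 | h2
    · rw [krow_ge _ _ hge] at h1
      omega
    · exfalso
      rw [krow_ge _ _ hge, spanrow_ge _ _ _ hge] at h2
      by_cases hsn : (x : ℕ) - ((σ x : ℕ) - (d - i)) = d - i
      · have hmem : x ∈ offS d (d - i) σ (d - i) := by
          rw [mem_offS, krow_ge _ _ hge, spanrow_ge _ _ _ hge]
          exact ⟨h2, hsn⟩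
        rw [hS', Finset.mem_singleton] at hmem
        have : (x : ℕ) = d + (d - i) - 1 := by rw [hmem]
        omega
      · have hmem : x ∈ offS d (d - i) σ ((x : ℕ) - ((σ x : ℕ) - (d - i))) := by
          rw [mem_offS, krow_ge _ _ hge, spanrow_ge _ _ _ hge]
          exact ⟨h2, rfl⟩
        have hc0 := hcard ((x : ℕ) - ((σ x : ℕ) - (d - i)))
        rw [if_neg (by omega), if_neg (by omega)] at hc0
        have hemp : offS d (d - i) σ ((x : ℕ) - ((σ x : ℕ) - (d - i))) = ∅ :=
          Finset.card_eq_zero.mp (by omega)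
        rw [hemp] at hmem
        exact Finset.notMem_empty _ hmem
  -- conclude
  by_cases hj1 : (j : ℕ) < d - 1
  · rw [if_pos hj1]
    exact hsmall j hj1
  · rw [if_neg hj1]
    by_cases hj2 : (j : ℕ) < d + (d - i) - 1
    · rw [if_pos hj2]
      exact (hmid j (by omega) hj2).2
    · rw [if_neg hj2]
      have hj : j = (⟨d + (d - i) - 1, by omega⟩ : Fin (d + (d - i))) :=
        Fin.ext (by have := j.isLt; show (j : ℕ) = d + (d - i) - 1; omega)
      rw [hj]
      exact hlast.2
noncomputable def Wfn (d i b : ℕ) : ℕ →₀ ℕ :=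
  if b < d - 1 then 0
  else if b < d + (d - i) - 1 then Finsupp.single (d - 1) 1
  else Finsupp.single (d - i) 1

noncomputable def Cfn (d i b : ℕ) : ℤ := if b < d - 1 then (d.choose i : ℤ) else 1

/-- The coefficient of `a_{d-1}^{d-i} a_{d-i}` in `R_i` is `(-1)^{(d-1)(d-i)} C(d,i)^{d-1}`. -/
theorem coeff_distinguished_monomial_resultant (d i : ℕ) (hd : 2 ≤ d)
    (hi1 : 2 ≤ i) (hi2 : i ≤ d - 1) :
    MvPolynomial.coeff (Finsupp.single (d - 1) (d - i) + Finsupp.single (d - i) 1)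
        (Rres d i) =
      (-1) ^ ((d - 1) * (d - i)) * (d.choose i : ℤ) ^ (d - 1) := by
  have hd3 : 3 ≤ d := by omega
  have hs3 : 3 ≤ d + (d - i) := by omega
  set σ₀ : Equiv.Perm (Fin (d + (d - i))) := (rho (d + (d - i)) hs3) ^ (d - i) with hσ₀
  have hσ₀val : ∀ j : Fin (d + (d - i)), ((σ₀ j : Fin (d + (d - i))) : ℕ) =
      if (j : ℕ) < d - 1 then (j : ℕ) + (d - i)
      else if (j : ℕ) < d + (d - i) - 1 then (j : ℕ) - (d - 1) else (j : ℕ) := by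
    intro j
    rw [hσ₀, rho_pow_val]
    by_cases h1 : (j : ℕ) < d - 1
    · rw [if_pos (by omega : (j : ℕ) < d + (d - i) - 1), if_pos h1,
        Nat.mod_eq_of_lt (by omega)]
    · rw [if_neg h1]
      by_cases h2 : (j : ℕ) < d + (d - i) - 1
      · rw [if_pos h2, if_pos h2, Nat.mod_eq_sub_mod (by omega),
          Nat.mod_eq_of_lt (by omega)]
        omega
      · rw [if_neg h2, if_neg h2]
  -- pointwise values along σ₀
  have hptw : ∀ j : Fin (d + (d - i)),
      wfun d (d - i) ((σ₀ j : Fin (d + (d - i))) : ℕ) (j : ℕ) = Wfn d i (j : ℕ) := by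
    intro j
    have hv := hσ₀val j
    unfold Wfn
    by_cases h1 : (j : ℕ) < d - 1
    · rw [if_pos h1] at hv ⊢
      rw [hv]
      exact (eval_g0 d i (j : ℕ)).1
    · rw [if_neg h1] at hv ⊢
      by_cases h2 : (j : ℕ) < d + (d - i) - 1
      · rw [if_pos h2] at hv ⊢
        rw [hv]
        exact (eval_f d i (j : ℕ) hd (by omega) h2).1
      · rw [if_neg h2] at hv ⊢
        have hj : (j : ℕ) = d + (d - i) - 1 := by have := j.isLt; omega
        rw [hv, hj]
        exact (eval_last d i hd (by omega) hi2).1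
  have hptc : ∀ j : Fin (d + (d - i)),
      cfun d i (d - i) ((σ₀ j : Fin (d + (d - i))) : ℕ) (j : ℕ) = Cfn d i (j : ℕ) := by
    intro j
    have hv := hσ₀val j
    unfold Cfn
    by_cases h1 : (j : ℕ) < d - 1
    · rw [if_pos h1] at hv ⊢
      rw [hv]
      exact (eval_g0 d i (j : ℕ)).2
    · rw [if_neg h1] at hv ⊢
      by_cases h2 : (j : ℕ) < d + (d - i) - 1
      · rw [if_pos h2] at hv
        rw [hv]
        exact (eval_f d i (j : ℕ) hd (by omega) h2).2
      · rw [if_neg h2] at hv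
        have hj : (j : ℕ) = d + (d - i) - 1 := by have := j.isLt; omega
        rw [hv, hj]
        exact (eval_last d i hd (by omega) hi2).2
  -- the sum of weights along σ₀
  have hsum : (∑ j : Fin (d + (d - i)), wfun d (d - i) ((σ₀ j : Fin (d + (d - i))) : ℕ) (j : ℕ)) =
      Finsupp.single (d - 1) (d - i) + Finsupp.single (d - i) 1 := by
    rw [Finset.sum_congr rfl (fun j _ => hptw j)]
    rw [Fin.sum_univ_eq_sum_range (Wfn d i) (d + (d - i))]
    rw [show d + (d - i) = (d + (d - i) - 1) + 1 from by omega, Finset.sum_range_succ]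
    rw [Finset.range_eq_Ico,
      ← Finset.sum_Ico_consecutive _ (Nat.zero_le (d - 1))
        (show d - 1 ≤ d + (d - i) - 1 from by omega)]
    have e1 : (∑ b ∈ Finset.Ico 0 (d - 1), Wfn d i b) = 0 :=
      Finset.sum_eq_zero (fun b hb => by
        unfold Wfn; rw [if_pos (Finset.mem_Ico.mp hb).2])
    have e2 : (∑ b ∈ Finset.Ico (d - 1) (d + (d - i) - 1), Wfn d i b) =
        Finsupp.single (d - 1) (d - i) := by
      rw [Finset.sum_congr rfl (fun b hb => show Wfn d i b = Finsupp.single (d - 1) 1 by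
        have hb' := Finset.mem_Ico.mp hb
        unfold Wfn
        rw [if_neg (by omega), if_pos hb'.2])]
      rw [Finset.sum_const, Nat.card_Ico,
        show d + (d - i) - 1 - (d - 1) = d - i from by omega, Finsupp.smul_single,
        smul_eq_mul, mul_one]
    have e3 : Wfn d i (d + (d - i) - 1) = Finsupp.single (d - i) 1 := by
      unfold Wfn
      rw [if_neg (by omega), if_neg (by omega)]
    rw [e1, e2, e3, zero_add]
  -- the product of constants along σ₀
  have hprod : (∏ j : Fin (d + (d - i)),
      cfun d i (d - i) ((σ₀ j : Fin (d + (d - i))) : ℕ) (j : ℕ)) = (d.choose i : ℤ) ^ (d - 1) := by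
    rw [Finset.prod_congr rfl (fun j _ => hptc j)]
    rw [Fin.prod_univ_eq_prod_range (Cfn d i) (d + (d - i))]
    rw [show d + (d - i) = (d + (d - i) - 1) + 1 from by omega, Finset.prod_range_succ]
    rw [Finset.range_eq_Ico,
      ← Finset.prod_Ico_consecutive _ (Nat.zero_le (d - 1))
        (show d - 1 ≤ d + (d - i) - 1 from by omega)]
    have e1 : (∏ b ∈ Finset.Ico 0 (d - 1), Cfn d i b) = (d.choose i : ℤ) ^ (d - 1) := by
      rw [Finset.prod_congr rfl (fun b hb => show Cfn d i b = (d.choose i : ℤ) by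
        unfold Cfn; rw [if_pos (Finset.mem_Ico.mp hb).2])]
      rw [Finset.prod_const, Nat.card_Ico, Nat.sub_zero]
    have e2 : (∏ b ∈ Finset.Ico (d - 1) (d + (d - i) - 1), Cfn d i b) = 1 :=
      Finset.prod_eq_one (fun b hb => by
        unfold Cfn; rw [if_neg (by have := (Finset.mem_Ico.mp hb).1; omega)])
    have e3 : Cfn d i (d + (d - i) - 1) = 1 := by
      unfold Cfn; rw [if_neg (by omega)]
    rw [e1, e2, e3, mul_one, mul_one]
  -- the sign of σ₀
  have hsign : ((Equiv.Perm.sign σ₀ : ℤˣ) : ℤ) = (-1) ^ ((d - 1) * (d - i)) := by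
    rw [hσ₀, map_pow, rho_sign, ← pow_mul]
    push_cast
    apply neg_one_pow_congr'
    have heq : (d + (d - i)) * (d - i) = (d - 1) * (d - i) + ((d - i) + 1) * (d - i) := by
      rw [show d + (d - i) = (d - 1) + ((d - i) + 1) from by omega, Nat.add_mul]
    have hev : 2 ∣ ((d - i) + 1) * (d - i) := by
      rcases Nat.even_or_odd (d - i) with h | h
      · exact Dvd.dvd.mul_left h.two_dvd _
      · exact Dvd.dvd.mul_right (Nat.even_add_one.mpr (Nat.not_even_iff_odd.mpr h)).two_dvd _
    omega
  -- main computation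
  unfold Rres res
  rw [Matrix.det_apply, MvPolynomial.coeff_sum]
  have hterm : ∀ σ : Equiv.Perm (Fin (d + (d - i))),
      MvPolynomial.coeff (Finsupp.single (d - 1) (d - i) + Finsupp.single (d - i) 1)
        (Equiv.Perm.sign σ • ∏ x : Fin (d + (d - i)),
          _root_.sylvester (genF d) (Polynomial.hasseDeriv i (genF d)) d (d - i) (σ x) x) =
      ((Equiv.Perm.sign σ : ℤˣ) : ℤ) *
        (if (∑ x : Fin (d + (d - i)), wfun d (d - i) ((σ x : Fin (d + (d - i))) : ℕ) (x : ℕ)) =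
            Finsupp.single (d - 1) (d - i) + Finsupp.single (d - i) 1 then
          (∏ x : Fin (d + (d - i)), cfun d i (d - i) ((σ x : Fin (d + (d - i))) : ℕ) (x : ℕ))
        else 0) := by
    intro σ
    rw [Finset.prod_congr rfl
      (fun x _ => sylvester_entry d i hd (by omega) hi2 (σ x) x)]
    rw [prod_monomial]
    rw [Units.smul_def, MvPolynomial.coeff_smul, MvPolynomial.coeff_monomial, smul_eq_mul]
  rw [Finset.sum_congr rfl (fun σ _ => hterm σ)]
  rw [Finset.sum_eq_single σ₀]
  · rw [if_pos hsum, hprod, hsign]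
  · intro σ _ hne
    by_cases hssum : (∑ x : Fin (d + (d - i)),
        wfun d (d - i) ((σ x : Fin (d + (d - i))) : ℕ) (x : ℕ)) =
        Finsupp.single (d - 1) (d - i) + Finsupp.single (d - i) 1
    · rw [if_pos hssum]
      by_cases hcz : (∏ x : Fin (d + (d - i)),
          cfun d i (d - i) ((σ x : Fin (d + (d - i))) : ℕ) (x : ℕ)) = 0
      · rw [hcz, mul_zero]
      · exfalso
        apply hne
        have hcj : ∀ x : Fin (d + (d - i)), cfun d i (d - i) ((σ x : Fin (d + (d - i))) : ℕ) (x : ℕ) ≠ 0 := by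
          intro x hx0
          exact hcz (Finset.prod_eq_zero (Finset.mem_univ x) hx0)
        apply Equiv.ext
        intro x
        apply Fin.ext
        rw [perm_unique d i hd hi1 hi2 σ hcj hssum x, hσ₀val x]
    · rw [if_neg hssum, mul_zero]
  · intro h
    exact absurd (Finset.mem_univ σ₀) h
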